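/- Let n ≥ q ≥ 1 be integers, let v ∈ ℝⁿ have all entries positive, let X ∈ F_v, and let X⊥ be an n×(n−q) real matrix such that (X X⊥) is orthogonal. Let g : ℝ^{n×q} → ℝ be convex, let ξ ∈ ℝ^{n×q}, let μ > 0, and let Q be the orthogonal projection of ℝ^{n×q} (with the Frobenius inner product) onto the subspace N_X. Let n₀ ∈ N_X and suppose p ∈ ℝ^{n×q} minimizes the function u ↦ (1/2)‖u − (X − μ(ξ − n₀))‖_F² + μ g(u) over ℝ^{n×q}; set w = p − X. Then w minimizes ℓ(η) = ⟨ξ, η⟩ + (1/(2μ))‖η‖_F² + g(X + η) over the affine set {η ∈ ℝ^{n×q} : Qη = Qw}. -/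

import Mathlib

open Matrix

/-- Let `Q` be the Frobenius-orthogonal projection onto the subspace `N_X`,
let `n₀ ∈ N_X`, and let `p` minimize `u ↦ (1/2)‖u − (X − μ(ξ − n₀))‖_F² + μ g(u)` over
`ℝ^{n×q}`; set `w = p − X`. Then `w` minimizes
`ℓ(η) = ⟨ξ, η⟩ + (1/(2μ))‖η‖_F² + g(X + η)` over `{η : Qη = Qw}`. -/
theorem stmt_12 (n q : ℕ) (hq : 1 ≤ q) (hnq : q ≤ n)
    (v : Fin n → ℝ) (hv : ∀ i, 0 < v i)
    (X : Matrix (Fin n) (Fin q) ℝ)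
    (hX : Xᵀ * X = 1 ∧ ∃ c : Fin q → ℝ, X *ᵥ c = v)
    (Xp : Matrix (Fin n) (Fin (n - q)) ℝ)
    (hO : (fromCols X Xp)ᵀ * fromCols X Xp = 1)
    (Nset : Set (Matrix (Fin n) (Fin q) ℝ))
    (hN : Nset = {U | ∃ (S : Matrix (Fin q) (Fin q) ℝ) (u : Fin (n - q) → ℝ),
      Sᵀ = S ∧ U = X * S + vecMulVec (Xp *ᵥ u) (v ᵥ* X)})
    (g : Matrix (Fin n) (Fin q) ℝ → ℝ) (hg : ConvexOn ℝ Set.univ g)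
    (ξ : Matrix (Fin n) (Fin q) ℝ) (μ : ℝ) (hμ : 0 < μ)
    (Q : Matrix (Fin n) (Fin q) ℝ →ₗ[ℝ] Matrix (Fin n) (Fin q) ℝ)
    (hQmem : ∀ z, Q z ∈ Nset)
    (hQid : ∀ z ∈ Nset, Q z = z)
    (hQorth : ∀ z, ∀ u ∈ Nset, Matrix.trace ((z - Q z)ᵀ * u) = 0)
    (n₀ : Matrix (Fin n) (Fin q) ℝ) (hn₀ : n₀ ∈ Nset)
    (p : Matrix (Fin n) (Fin q) ℝ)
    (hp : ∀ u : Matrix (Fin n) (Fin q) ℝ,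
      (1 / 2 : ℝ) * Matrix.trace ((p - (X - μ • (ξ - n₀)))ᵀ * (p - (X - μ • (ξ - n₀)))) +
          μ * g p ≤
        (1 / 2 : ℝ) * Matrix.trace ((u - (X - μ • (ξ - n₀)))ᵀ * (u - (X - μ • (ξ - n₀)))) +
          μ * g u)
    (w : Matrix (Fin n) (Fin q) ℝ) (hw : w = p - X)
    (l : Matrix (Fin n) (Fin q) ℝ → ℝ)
    (hl : l = fun η => Matrix.trace (ξᵀ * η) +
      (1 / (2 * μ)) * Matrix.trace (ηᵀ * η) + g (X + η)) :
    ∀ η : Matrix (Fin n) (Fin q) ℝ, Q η = Q w → l w ≤ l η := by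
  intro η hη
  have hμ' : μ ≠ 0 := ne_of_gt hμ
  set A := μ • (ξ - n₀) with hA
  have tsymm : ∀ a b : Matrix (Fin n) (Fin q) ℝ,
      Matrix.trace (aᵀ * b) = Matrix.trace (bᵀ * a) := by
    intro a b
    rw [← Matrix.trace_transpose (aᵀ * b), Matrix.transpose_mul, Matrix.transpose_transpose]
  have expand : ∀ a : Matrix (Fin n) (Fin q) ℝ,
      Matrix.trace ((a + A)ᵀ * (a + A)) =
        Matrix.trace (aᵀ * a) + 2 * Matrix.trace (Aᵀ * a) + Matrix.trace (Aᵀ * A) := by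
    intro a
    rw [Matrix.transpose_add, Matrix.add_mul, Matrix.mul_add, Matrix.mul_add,
      Matrix.trace_add, Matrix.trace_add, Matrix.trace_add, tsymm a A]
    ring
  have hAtr : ∀ a : Matrix (Fin n) (Fin q) ℝ,
      Matrix.trace (Aᵀ * a) = μ * (Matrix.trace (ξᵀ * a) - Matrix.trace (n₀ᵀ * a)) := by
    intro a
    rw [hA, Matrix.transpose_smul, Matrix.smul_mul, Matrix.trace_smul, Matrix.transpose_sub,
      Matrix.sub_mul, Matrix.trace_sub]
    simp
  have key := hp (X + η)
  have h1 : p - (X - A) = w + A := by rw [hw]; abel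
  have h2 : X + η - (X - A) = η + A := by abel
  rw [h1, h2, expand, expand] at key
  have hpw : p = X + w := by rw [hw]; abel
  rw [hpw] at key
  have horthw := hQorth w n₀ hn₀
  have horthη := hQorth η n₀ hn₀
  rw [hη] at horthη
  have hsub : Matrix.trace (n₀ᵀ * w) = Matrix.trace (n₀ᵀ * η) := by
    rw [tsymm n₀ w, tsymm n₀ η]
    have e1 : Matrix.trace (wᵀ * n₀) - Matrix.trace ((Q w)ᵀ * n₀) = 0 := by
      rw [← Matrix.trace_sub, ← Matrix.sub_mul, ← Matrix.transpose_sub]; exact horthw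
    have e2 : Matrix.trace (ηᵀ * n₀) - Matrix.trace ((Q w)ᵀ * n₀) = 0 := by
      rw [← Matrix.trace_sub, ← Matrix.sub_mul, ← Matrix.transpose_sub]; exact horthη
    linarith
  rw [hAtr w, hAtr η] at key
  rw [hl]
  simp only
  rw [← mul_le_mul_iff_right₀ hμ]
  have e : ∀ t : ℝ, μ * (1 / (2 * μ) * t) = t / 2 := by
    intro t; field_simp
  rw [mul_add, mul_add, mul_add, mul_add, e, e]
  nlinarith [key, hsub, hμ.le]
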